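/- arXiv:2106.00726 — 2 statements merged into one kernel-verified Lean document; each statement's English description precedes it below -/
import Mathlib

section
/- Let A be an n×n complex matrix, λ an eigenvalue of A, and z a complex number not in the spectrum of A such that σₙ(zIₙ − A) = |z − λ|. Then λ is a semisimple eigenvalue of A, i.e., the root subspace (generalized eigenspace) of A associated with λ equals the eigenspace ker(λIₙ − A), so the algebraic multiplicity of λ equals its geometric multiplicity. -/
open Matrix
open scoped ComplexOrder

lemma sv_key{n : ℕ} [Nonempty (Fin n)] (M : Matrix (Fin n) (Fin n) ℂ) (v : Fin n → ℂ) :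
    (⨅ i, (Matrix.isHermitian_conjTranspose_mul_self M).eigenvalues i) * (star v ⬝ᵥ v).re
      ≤ (star (M *ᵥ v) ⬝ᵥ (M *ᵥ v)).re := by
  have hH := Matrix.isHermitian_conjTranspose_mul_self M
  set c : ℝ := ⨅ i, hH.eigenvalues i with hc
  have hcle : ∀ i, c ≤ hH.eigenvalues i := fun i =>
    ciInf_le (Set.Finite.bddBelow (Set.finite_range _)) i
  set U : Matrix (Fin n) (Fin n) ℂ := (hH.eigenvectorUnitary : Matrix (Fin n) (Fin n) ℂ) with hU
  have hUU : U * Uᴴ = 1 := by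
    rw [← Matrix.star_eq_conjTranspose]
    exact (Matrix.mem_unitaryGroup_iff).mp hH.eigenvectorUnitary.2
  have hdecomp : Mᴴ * M - (c : ℂ) • 1
      = U * diagonal (fun i => ((hH.eigenvalues i - c : ℝ) : ℂ)) * Uᴴ := by
    have h1 : (c : ℂ) • (1 : Matrix (Fin n) (Fin n) ℂ) = U * ((c : ℂ) • 1) * Uᴴ := by
      rw [Matrix.mul_smul, Matrix.smul_mul, mul_one, hUU]
    calc Mᴴ * M - (c : ℂ) • 1
        = U * diagonal (RCLike.ofReal ∘ hH.eigenvalues) * Uᴴ - U * ((c:ℂ) • 1) * Uᴴ := by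
          rw [← h1]
          congr 1
          exact hH.spectral_theorem
      _ = U * (diagonal (RCLike.ofReal ∘ hH.eigenvalues) - (c:ℂ) • 1) * Uᴴ := by
          rw [Matrix.mul_sub, Matrix.sub_mul]
      _ = U * diagonal (fun i => ((hH.eigenvalues i - c : ℝ) : ℂ)) * Uᴴ := by
          congr 2
          rw [Matrix.smul_one_eq_diagonal, Matrix.diagonal_sub]
          funext i
          simp [Function.comp]
  have hps : (Mᴴ * M - (c : ℂ) • 1).PosSemidef := by
    rw [hdecomp]
    refine Matrix.PosSemidef.mul_mul_conjTranspose_same ?_ U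
    refine Matrix.posSemidef_diagonal_iff.mpr fun i => ?_
    have : (0:ℝ) ≤ hH.eigenvalues i - c := sub_nonneg.mpr (hcle i)
    exact_mod_cast this
  have h2 := hps.dotProduct_mulVec_nonneg v
  have h3 : star v ⬝ᵥ ((Mᴴ * M - (c : ℂ) • 1) *ᵥ v)
      = star (M *ᵥ v) ⬝ᵥ (M *ᵥ v) - (c:ℂ) * (star v ⬝ᵥ v) := by
    rw [Matrix.sub_mulVec, Matrix.smul_mulVec, Matrix.one_mulVec,
      dotProduct_sub, ← Matrix.mulVec_mulVec, Matrix.dotProduct_mulVec,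
      ← Matrix.star_mulVec, dotProduct_smul, smul_eq_mul]
  rw [h3] at h2
  have h4 := Complex.le_def.mp h2
  have := h4.1
  simp only [Complex.zero_re, Complex.sub_re, Complex.re_ofReal_mul] at this
  linarith

lemma expandQ{n : ℕ} (x y : Fin n → ℂ) (t : ℂ) :
    (star (y + t • x) ⬝ᵥ (y + t • x)).re
      = (star y ⬝ᵥ y).re + 2 * (t * (star y ⬝ᵥ x)).re
        + Complex.normSq t * (star x ⬝ᵥ x).re := by
  have hconj : star x ⬝ᵥ y = star (star y ⬝ᵥ x) := Matrix.star_dotProduct x y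
  rw [star_add, star_smul, add_dotProduct, dotProduct_add,
    dotProduct_add, smul_dotProduct, smul_dotProduct,
    dotProduct_smul, dotProduct_smul, hconj]
  simp only [smul_eq_mul, star_trivial, RCLike.star_def]
  have h1 : (starRingEnd ℂ) t * ((starRingEnd ℂ) (star y ⬝ᵥ x)) = (starRingEnd ℂ) (t * (star y ⬝ᵥ x)) := by
    rw [_root_.map_mul]
  have h2 : ((starRingEnd ℂ) t * (t * (star x ⬝ᵥ x))) = (Complex.normSq t : ℂ) * (star x ⬝ᵥ x) := by
    rw [← mul_assoc, ← Complex.normSq_eq_conj_mul_self]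
  rw [h1, h2]
  simp [Complex.add_re, Complex.conj_re, Complex.re_ofReal_mul]
  ring


/-- The smallest singular value of a square complex matrix `M`:
the nonnegative square root of the smallest eigenvalue of `Mᴴ * M`. -/
noncomputable def sigmaMin {n : ℕ} (M : Matrix (Fin n) (Fin n) ℂ) : ℝ :=
  Real.sqrt (⨅ i, (Matrix.isHermitian_conjTranspose_mul_self M).eigenvalues i)

/-- If λ is an eigenvalue of A and z ∉ Λ(A) satisfies σₙ(zIₙ − A) = |z − λ|, then λ is a
semisimple eigenvalue of A: the root subspace ker((λIₙ − A)ⁿ) equals the eigenspace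
ker(λIₙ − A). -/
theorem root_subspace_eq_eigenspace_of_singular_value_eq_dist
    {n : ℕ} (A : Matrix (Fin n) (Fin n) ℂ) (μ : ℂ)
    (hμeig : ∃ x : Fin n → ℂ, x ≠ 0 ∧ A *ᵥ x = μ • x)
    (z : ℂ) (hz : z ∉ spectrum ℂ A)
    (h : sigmaMin (z • (1 : Matrix (Fin n) (Fin n) ℂ) - A) = ‖z - μ‖) :
    LinearMap.ker (((μ • (1 : Matrix (Fin n) (Fin n) ℂ) - A) ^ n).mulVecLin)
      = LinearMap.ker ((μ • (1 : Matrix (Fin n) (Fin n) ℂ) - A).mulVecLin) := by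
  -- n is positive
  rcases Nat.eq_zero_or_pos n with hn | hn
  · subst hn
    obtain ⟨x, hx0, -⟩ := hμeig
    exact absurd (funext fun i => absurd i.2 (by omega)) hx0
  have : Nonempty (Fin n) := ⟨⟨0, hn⟩⟩
  -- μ is in the spectrum, so z ≠ μ
  have hzμ : z ≠ μ := by
    rintro rfl
    apply hz
    rw [spectrum.mem_iff]
    intro hunit
    obtain ⟨x, hx0, hx⟩ := hμeig
    obtain ⟨u, hu⟩ := hunit
    apply hx0
    have hNx : (algebraMap ℂ (Matrix (Fin n) (Fin n) ℂ) z - A) *ᵥ x = 0 := by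
      rw [Algebra.algebraMap_eq_smul_one, Matrix.sub_mulVec, Matrix.smul_mulVec,
        Matrix.one_mulVec, hx, sub_self]
    calc x = 1 *ᵥ x := (Matrix.one_mulVec x).symm
      _ = ((↑u⁻¹ : Matrix (Fin n) (Fin n) ℂ) * (algebraMap ℂ _ z - A)) *ᵥ x := by
          rw [← hu, Units.inv_mul]
      _ = (↑u⁻¹ : Matrix (Fin n) (Fin n) ℂ) *ᵥ ((algebraMap ℂ _ z - A) *ᵥ x) := by
          rw [Matrix.mulVec_mulVec]
      _ = 0 := by rw [hNx, Matrix.mulVec_zero]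
  set N : Matrix (Fin n) (Fin n) ℂ := μ • 1 - A with hN
  set M : Matrix (Fin n) (Fin n) ℂ := z • 1 - A with hM
  set c : ℂ := z - μ with hcdef
  have hc0 : c ≠ 0 := sub_ne_zero.mpr hzμ
  have hMN : M = c • 1 + N := by
    rw [hM, hN, hcdef, sub_smul]; abel
  -- the singular value inequality, with the infimum identified
  have hI : (⨅ i, (Matrix.isHermitian_conjTranspose_mul_self M).eigenvalues i)
      = Complex.normSq c := by
    set I := ⨅ i, (Matrix.isHermitian_conjTranspose_mul_self M).eigenvalues i with hIdef
    have hs : Real.sqrt I = ‖c‖ := h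
    have hI0 : 0 ≤ I := by
      by_contra hneg
      push_neg at hneg
      rw [Real.sqrt_eq_zero_of_nonpos hneg.le] at hs
      exact hc0 (norm_eq_zero.mp hs.symm)
    have := congrArg (fun r => r ^ 2) hs
    simpa [Real.sq_sqrt hI0, Complex.sq_norm] using this
  have hkey : ∀ v : Fin n → ℂ,
      Complex.normSq c * (star v ⬝ᵥ v).re ≤ (star (M *ᵥ v) ⬝ᵥ (M *ᵥ v)).re := by
    intro v
    have := sv_key M v
    rwa [hI] at this
  -- both kernels
  apply le_antisymm
  · -- hard direction
    intro v hv
    simp only [LinearMap.mem_ker, Matrix.mulVecLin_apply] at hv ⊢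
    by_contra hNv
    -- find the top of the Jordan chain
    have hchain : ∃ k, 1 ≤ k ∧ (N ^ k) *ᵥ v ≠ 0 ∧ (N ^ (k + 1)) *ᵥ v = 0 := by
      have hstep : ∀ m, 1 ≤ m → (N ^ m) *ᵥ v = 0 →
          ∃ k, 1 ≤ k ∧ (N ^ k) *ᵥ v ≠ 0 ∧ (N ^ (k + 1)) *ᵥ v = 0 := by
        intro m
        induction m with
        | zero => omega
        | succ m ih =>
          intro _ hm
          by_cases hm' : (N ^ m) *ᵥ v = 0
          · rcases Nat.eq_zero_or_pos m with rfl | hmpos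
            · rw [zero_add, pow_one] at hm
              exact absurd hm hNv
            · exact ih hmpos hm'
          · refine ⟨m, ?_, hm', hm⟩
            rcases Nat.eq_zero_or_pos m with rfl | hmpos
            · rw [zero_add, pow_one] at hm
              exact absurd hm hNv
            · exact hmpos
      have hvn : (N ^ n) *ᵥ v = 0 := hv
      exact hstep n hn hvn
    obtain ⟨k, hk1, hxne, hxkill⟩ := hchain
    obtain ⟨j, rfl⟩ : ∃ j, k = j + 1 := ⟨k - 1, by omega⟩
    set x : Fin n → ℂ := (N ^ (j + 1)) *ᵥ v with hxdef
    set y : Fin n → ℂ := (N ^ j) *ᵥ v with hydef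
    have hNy : N *ᵥ y = x := by
      rw [hydef, hxdef, Matrix.mulVec_mulVec, ← pow_succ']
    have hNx : N *ᵥ x = 0 := by
      rw [hxdef, Matrix.mulVec_mulVec, ← pow_succ']
      exact hxkill
    -- action of M
    have hMx : M *ᵥ x = c • x := by
      rw [hMN, Matrix.add_mulVec, Matrix.smul_mulVec, Matrix.one_mulVec, hNx, add_zero]
    have hMy : ∀ t : ℂ, M *ᵥ (y + t • x) = c • (y + (t + c⁻¹) • x) := by
      intro t
      have h1 : M *ᵥ y = c • y + x := by
        rw [hMN, Matrix.add_mulVec, Matrix.smul_mulVec, Matrix.one_mulVec, hNy]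
      rw [Matrix.mulVec_add, Matrix.mulVec_smul, h1, hMx, smul_add, smul_smul, smul_smul,
        mul_add, mul_inv_cancel₀ hc0, add_smul, one_smul, mul_comm]
      abel
    -- quadratic form monotonicity along the chain
    have hmono : ∀ t : ℂ, (star (y + t • x) ⬝ᵥ (y + t • x)).re
        ≤ (star (y + (t + c⁻¹) • x) ⬝ᵥ (y + (t + c⁻¹) • x)).re := by
      intro t
      have h1 := hkey (y + t • x)
      rw [hMy t] at h1
      have h2 : (star (c • (y + (t + c⁻¹) • x)) ⬝ᵥ (c • (y + (t + c⁻¹) • x)))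
          = (Complex.normSq c : ℂ) * (star (y + (t + c⁻¹) • x) ⬝ᵥ (y + (t + c⁻¹) • x)) := by
        rw [star_smul, smul_dotProduct, dotProduct_smul, smul_eq_mul, smul_eq_mul,
          ← mul_assoc, RCLike.star_def, ← Complex.normSq_eq_conj_mul_self]
      rw [h2, Complex.re_ofReal_mul] at h1
      have hnc : 0 < Complex.normSq c := Complex.normSq_pos.mpr hc0
      exact le_of_mul_le_mul_left h1 hnc
    -- set up real quadratic
    set s : ℂ := c⁻¹ with hsdef
    have hs0 : s ≠ 0 := inv_ne_zero hc0
    set Qx : ℝ := (star x ⬝ᵥ x).re with hQx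
    set R : ℝ := (s * (star y ⬝ᵥ x)).re with hR
    set D : ℝ := Complex.normSq s * Qx with hD
    have hQxpos : 0 < Qx := by
      have hne : star x ⬝ᵥ x ≠ 0 := by
        rw [Ne, dotProduct_star_self_eq_zero]
        exact hxne
      have : (star x ⬝ᵥ x).re = ∑ i, Complex.normSq (x i) := by
        simp [dotProduct, Complex.normSq_apply, Complex.re_sum]
      rw [hQx, this]
      rcases Function.ne_iff.mp hxne with ⟨i, hi⟩
      exact Finset.sum_pos' (fun i _ => Complex.normSq_nonneg _)
        ⟨i, Finset.mem_univ i, Complex.normSq_pos.mpr hi⟩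
    have hDpos : 0 < D := mul_pos (Complex.normSq_pos.mpr hs0) hQxpos
    -- instantiate at t = r • s
    have hreal : ∀ r : ℝ, 0 ≤ 2 * R + D * (2 * r + 1) := by
      intro r
      have h1 := hmono ((r : ℂ) * s)
      rw [expandQ, expandQ] at h1
      have e1 : ((r : ℂ) * s + s) = (((r + 1 : ℝ)) : ℂ) * s := by push_cast; ring
      rw [e1] at h1
      have e2 : ∀ u : ℝ, ((u : ℂ) * s * (star y ⬝ᵥ x)).re = u * R := by
        intro u
        rw [hR, mul_assoc, Complex.re_ofReal_mul]
      have e3 : ∀ u : ℝ, Complex.normSq ((u : ℂ) * s) = u ^ 2 * Complex.normSq s := by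
        intro u
        rw [Complex.normSq_mul, Complex.normSq_ofReal, sq]
      rw [e2, e2, e3, e3] at h1
      rw [hD]
      nlinarith [h1]
    have := hreal (-(2 * R + D + 1) / (2 * D))
    have hcalc : 2 * R + D * (2 * (-(2 * R + D + 1) / (2 * D)) + 1) = -1 := by
      field_simp
      ring
    rw [hcalc] at this
    linarith
  · -- easy direction
    intro v hv
    simp only [LinearMap.mem_ker, Matrix.mulVecLin_apply] at hv ⊢
    obtain ⟨m, rfl⟩ : ∃ m, n = m + 1 := ⟨n - 1, by omega⟩
    rw [pow_succ, ← Matrix.mulVec_mulVec, hv, Matrix.mulVec_zero]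
end

section
/- Let A be an n×n complex matrix (n ≥ 1). If for every complex number z one has σₙ(zIₙ − A) = dist(z, Λ(A)), where dist(z, Λ(A)) = min over α ∈ Λ(A) of |z − α|, then A is normal, i.e., A*A = AA*. -/
open Matrix

namespace SigmaMinAux

variable {n : ℕ}

/-- Rayleigh-type lower bound: the smallest eigenvalue of `Mᴴ M` bounds `‖Mu‖²/‖u‖²`. -/
lemma rayleigh (hn : 0 < n) (M : Matrix (Fin n) (Fin n) ℂ) (u : EuclideanSpace ℂ (Fin n)) :
    (⨅ i, (Matrix.isHermitian_conjTranspose_mul_self M).eigenvalues i) * ‖u‖ ^ 2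
      ≤ ‖Matrix.toEuclideanLin M u‖ ^ 2 := by
  haveI : NeZero n := ⟨hn.ne'⟩
  set c : ℝ := ⨅ i, (Matrix.isHermitian_conjTranspose_mul_self M).eigenvalues i with hc
  have hB : (Mᴴ * M - algebraMap ℝ (Matrix (Fin n) (Fin n) ℂ) c).IsHermitian := by
    refine (Matrix.isHermitian_conjTranspose_mul_self M).sub ?_
    simp [Matrix.IsHermitian, Algebra.algebraMap_eq_smul_one, Matrix.conjTranspose_smul]
  have hceig : ∀ i, 0 ≤ hB.eigenvalues i := by
    intro i
    have h1 := hB.eigenvalues_mem_spectrum_real i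
    rw [← spectrum.sub_singleton_eq, Set.mem_sub] at h1
    obtain ⟨x, hx, y, hy, hxy⟩ := h1
    rw [(Matrix.isHermitian_conjTranspose_mul_self M).spectrum_real_eq_range_eigenvalues] at hx
    obtain ⟨j, rfl⟩ := hx
    rw [Set.mem_singleton_iff] at hy
    subst hy
    have hle : c ≤ (Matrix.isHermitian_conjTranspose_mul_self M).eigenvalues j :=
      ciInf_le (Set.Finite.bddBelow (Set.finite_range _)) j
    linarith [hxy.symm]
  have hPSD := hB.posSemidef_iff_eigenvalues_nonneg.mpr hceig
  set x : Fin n → ℂ := (WithLp.equiv 2 (Fin n → ℂ)) u with hx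
  have hdot := hPSD.re_dotProduct_nonneg x
  have e1 : (Mᴴ * M - algebraMap ℝ (Matrix (Fin n) (Fin n) ℂ) c) *ᵥ x
      = Mᴴ *ᵥ (M *ᵥ x) - c • x := by
    simp [Matrix.sub_mulVec, Algebra.algebraMap_eq_smul_one, Matrix.smul_mulVec,
      Matrix.one_mulVec, Matrix.mulVec_mulVec]
  have e2 : star x ⬝ᵥ (Mᴴ *ᵥ (M *ᵥ x)) = star (M *ᵥ x) ⬝ᵥ (M *ᵥ x) := by
    rw [Matrix.dotProduct_mulVec, ← Matrix.star_mulVec]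
  have e3 : ∀ y : Fin n → ℂ,
      RCLike.re (star y ⬝ᵥ y) = ‖(WithLp.equiv 2 (Fin n → ℂ)).symm y‖ ^ 2 := by
    intro y
    have h4 := inner_self_eq_norm_sq (𝕜 := ℂ) ((WithLp.equiv 2 (Fin n → ℂ)).symm y)
    rw [EuclideanSpace.inner_eq_star_dotProduct, dotProduct_comm] at h4
    simpa using h4
  rw [e1, dotProduct_sub, map_sub, e2] at hdot
  have e4 : RCLike.re (star x ⬝ᵥ (c • x)) = c * RCLike.re (star x ⬝ᵥ x) := by
    rw [dotProduct_smul]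
    exact RCLike.smul_re _ _
  rw [e4] at hdot
  have e5 : RCLike.re (star (M *ᵥ x) ⬝ᵥ (M *ᵥ x)) = ‖Matrix.toEuclideanLin M u‖ ^ 2 := by
    rw [e3, Matrix.toEuclideanLin_apply]; rfl
  have e6 : RCLike.re (star x ⬝ᵥ x) = ‖u‖ ^ 2 := by
    rw [e3]; simp [hx]
  rw [e5, e6] at hdot
  linarith

/-- The key inequality derived from the hypothesis. -/
lemma key (hn : 0 < n) (A : Matrix (Fin n) (Fin n) ℂ)
    (h : ∀ z : ℂ, sigmaMin (z • (1 : Matrix (Fin n) (Fin n) ℂ) - A)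
      = Metric.infDist z (spectrum ℂ A)) (z : ℂ) (u : EuclideanSpace ℂ (Fin n)) :
    Metric.infDist z (spectrum ℂ A) * ‖u‖ ≤ ‖z • u - Matrix.toEuclideanLin A u‖ := by
  haveI : NeZero n := ⟨hn.ne'⟩
  have happ : Matrix.toEuclideanLin (z • (1 : Matrix (Fin n) (Fin n) ℂ) - A) u
      = z • u - Matrix.toEuclideanLin A u := by
    apply PiLp.ext
    intro i
    simp [Matrix.toEuclideanLin_apply, Matrix.sub_mulVec, Matrix.smul_mulVec,
      Matrix.one_mulVec]
  have hc0 : 0 ≤ ⨅ i, (Matrix.isHermitian_conjTranspose_mul_self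
      (z • (1 : Matrix (Fin n) (Fin n) ℂ) - A)).eigenvalues i :=
    Real.iInf_nonneg fun i => Matrix.eigenvalues_conjTranspose_mul_self_nonneg _ i
  have hd : Metric.infDist z (spectrum ℂ A) ^ 2
      = ⨅ i, (Matrix.isHermitian_conjTranspose_mul_self
          (z • (1 : Matrix (Fin n) (Fin n) ℂ) - A)).eigenvalues i := by
    rw [← h z]
    exact Real.sq_sqrt hc0
  have hr := rayleigh hn (z • (1 : Matrix (Fin n) (Fin n) ℂ) - A) u
  rw [← happ]
  have h1 : (Metric.infDist z (spectrum ℂ A) * ‖u‖) ^ 2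
      ≤ ‖Matrix.toEuclideanLin (z • (1 : Matrix (Fin n) (Fin n) ℂ) - A) u‖ ^ 2 := by
    rw [mul_pow, hd]; exact hr
  have h2 : 0 ≤ Metric.infDist z (spectrum ℂ A) * ‖u‖ :=
    mul_nonneg Metric.infDist_nonneg (norm_nonneg _)
  nlinarith [norm_nonneg (Matrix.toEuclideanLin (z • (1 : Matrix (Fin n) (Fin n) ℂ) - A) u)]

/-- Eigenvectors are orthogonal to the range of `A - μ`. -/
lemma orth (hn : 0 < n) (A : Matrix (Fin n) (Fin n) ℂ)
    (h : ∀ z : ℂ, sigmaMin (z • (1 : Matrix (Fin n) (Fin n) ℂ) - A)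
      = Metric.infDist z (spectrum ℂ A)) (μ : ℂ) (v w : EuclideanSpace ℂ (Fin n))
    (hv : Matrix.toEuclideanLin A v = μ • v) :
    (inner ℂ v (Matrix.toEuclideanLin A w - μ • w) : ℂ) = 0 := by
  rcases eq_or_ne v 0 with rfl | hv0
  · simp
  have hμ : μ ∈ spectrum ℂ A := by
    rw [← Matrix.spectrum_toEuclideanLin]
    exact Module.End.hasEigenvalue_iff_mem_spectrum.mp
      (Module.End.hasEigenvalue_of_hasEigenvector
        ⟨Module.End.mem_eigenspace_iff.mpr hv, hv0⟩)
  have hΛne : (spectrum ℂ A).Nonempty := ⟨μ, hμ⟩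
  have hfin : (spectrum ℂ A).Finite := Matrix.finite_spectrum A
  obtain ⟨r, hr0, hrsep⟩ : ∃ r : ℝ, 0 < r ∧ ∀ α ∈ spectrum ℂ A, α ≠ μ → 2 * r ≤ dist μ α := by
    rcases Set.eq_empty_or_nonempty (spectrum ℂ A \ {μ}) with he | hne
    · refine ⟨1, one_pos, fun α hα hne' => absurd ?_ (Set.notMem_empty α)⟩
      rw [← he]; exact ⟨hα, hne'⟩
    · refine ⟨Metric.infDist μ (spectrum ℂ A \ {μ}) / 2, ?_, ?_⟩
      · have hclosed : IsClosed (spectrum ℂ A \ {μ}) :=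
          (hfin.subset Set.diff_subset).isClosed
        have hnm : μ ∉ spectrum ℂ A \ {μ} := fun hmem => hmem.2 rfl
        have := (hclosed.notMem_iff_infDist_pos hne).mp hnm
        linarith
      · intro α hα hne'
        have := Metric.infDist_le_dist_of_mem (x := μ) (show α ∈ spectrum ℂ A \ {μ} from ⟨hα, hne'⟩)
        linarith
  have hrle : r ≤ Metric.infDist (μ + r) (spectrum ℂ A) := by
    by_contra hlt
    push_neg at hlt
    obtain ⟨α, hα, hdα⟩ := (Metric.infDist_lt_iff hΛne).mp hlt
    have hdm : dist (μ + (r : ℂ)) μ = r := by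
      simp [Complex.dist_eq, abs_of_pos hr0]
    rcases eq_or_ne α μ with rfl | hne'
    · rw [hdm] at hdα; exact lt_irrefl _ hdα
    · have h2r := hrsep α hα hne'
      have htri : dist μ α ≤ dist μ (μ + (r : ℂ)) + dist (μ + (r : ℂ)) α := dist_triangle _ _ _
      rw [dist_comm] at hdm
      rw [hdm] at htri
      linarith
  set f := Matrix.toEuclideanLin A with hf
  set g : EuclideanSpace ℂ (Fin n) := f w - μ • w with hg
  set y : EuclideanSpace ℂ (Fin n) := (r : ℂ) • w - g with hy
  have hyw : (μ + (r : ℂ)) • w - f w = y := by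
    rw [hy, hg]; module
  have hkey : ∀ δ : ℂ, r * ‖v + δ • w‖ ≤ ‖(r : ℂ) • v + δ • y‖ := by
    intro δ
    have hK := key hn A h (μ + r) (v + δ • w)
    have hrw : (μ + (r : ℂ)) • (v + δ • w) - f (v + δ • w) = (r : ℂ) • v + δ • y := by
      rw [hy, hg, map_add, _root_.map_smul, hv]
      module
    calc r * ‖v + δ • w‖
        ≤ Metric.infDist (μ + r) (spectrum ℂ A) * ‖v + δ • w‖ :=
          mul_le_mul_of_nonneg_right hrle (norm_nonneg _)
      _ ≤ ‖(μ + (r : ℂ)) • (v + δ • w) - f (v + δ • w)‖ := hK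
      _ = _ := by rw [hrw]
  have hCw : r * ‖w‖ ≤ ‖y‖ := by
    have hK := key hn A h (μ + r) w
    rw [hyw] at hK
    exact le_trans (mul_le_mul_of_nonneg_right hrle (norm_nonneg _)) hK
  set C : ℝ := ‖y‖ ^ 2 - r ^ 2 * ‖w‖ ^ 2 with hC
  have hC0 : 0 ≤ C := by
    have h5 := mul_self_le_mul_self (mul_nonneg hr0.le (norm_nonneg w)) hCw
    rw [hC]; nlinarith
  set a : ℂ := inner ℂ v g with ha
  have hineq : ∀ δ : ℂ, 0 ≤ -(2 * r * (δ * a).re) + ‖δ‖ ^ 2 * C := by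
    intro δ
    have h1 := hkey δ
    have h2 : r ^ 2 * ‖v + δ • w‖ ^ 2 ≤ ‖(r : ℂ) • v + δ • y‖ ^ 2 := by
      nlinarith [mul_nonneg hr0.le (norm_nonneg (v + δ • w)),
        norm_nonneg ((r : ℂ) • v + δ • y)]
    rw [norm_add_sq (𝕜 := ℂ) ((r : ℂ) • v) (δ • y), norm_add_sq (𝕜 := ℂ) v (δ • w)] at h2
    rw [inner_smul_right, inner_smul_left, inner_smul_right] at h2
    have hvy : (inner ℂ v y : ℂ) = (r : ℂ) * (inner ℂ v w : ℂ) - a := by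
      rw [hy, inner_sub_right, inner_smul_right, ha]
    rw [hvy] at h2
    have hnsv : ‖(r : ℂ) • v‖ ^ 2 = r ^ 2 * ‖v‖ ^ 2 := by
      rw [norm_smul, mul_pow, Complex.norm_real, Real.norm_eq_abs, sq_abs]
    have hnsw : ‖δ • w‖ ^ 2 = ‖δ‖ ^ 2 * ‖w‖ ^ 2 := by
      rw [norm_smul, mul_pow]
    have hnsy : ‖δ • y‖ ^ 2 = ‖δ‖ ^ 2 * ‖y‖ ^ 2 := by
      rw [norm_smul, mul_pow]
    rw [hnsv, hnsw, hnsy] at h2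
    have hre1 : RCLike.re ((starRingEnd ℂ) (r : ℂ) * (δ * ((r : ℂ) * (inner ℂ v w : ℂ) - a)))
        = r * (r * RCLike.re (δ * (inner ℂ v w : ℂ)) - (δ * a).re) := by
      simp only [RCLike.re_to_complex, Complex.conj_ofReal]
      have he : (r : ℂ) * (δ * ((r : ℂ) * (inner ℂ v w : ℂ) - a))
          = (r : ℂ) * ((r : ℂ) * (δ * (inner ℂ v w : ℂ)) - δ * a) := by ring
      rw [he, Complex.re_ofReal_mul, Complex.sub_re, Complex.re_ofReal_mul]
    rw [hre1] at h2
    simp only [RCLike.re_to_complex] at h2 ⊢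
    rw [hC]
    set s1 : ℝ := (δ * (inner ℂ v w : ℂ)).re with hs1
    set s2 : ℝ := (δ * a).re with hs2
    ring_nf at h2 ⊢
    linarith
  have haz : a = 0 := by
    by_contra ha0
    have hsq : 0 < Complex.normSq a := Complex.normSq_pos.mpr ha0
    set t : ℝ := r / (C + 1) with htdef
    have ht0 : 0 < t := div_pos hr0 (by linarith)
    have htC : t * C < r := by
      rw [htdef, div_mul_eq_mul_div, div_lt_iff₀ (by linarith : (0:ℝ) < C + 1)]
      nlinarith
    have hq := hineq ((t : ℂ) * (starRingEnd ℂ) a)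
    have he1 : (((t : ℂ) * (starRingEnd ℂ) a) * a).re = t * Complex.normSq a := by
      rw [mul_assoc, Complex.re_ofReal_mul]
      congr 1
      rw [mul_comm, Complex.mul_conj]
      simp
    have he2 : ‖(t : ℂ) * (starRingEnd ℂ) a‖ ^ 2 = t ^ 2 * Complex.normSq a := by
      rw [norm_mul, mul_pow, Complex.norm_real, Real.norm_eq_abs, sq_abs, RCLike.norm_conj,
        Complex.sq_norm]
    rw [he1, he2] at hq
    have hts : 0 < t * Complex.normSq a := mul_pos ht0 hsq
    have h7 : t * Complex.normSq a * (t * C) < t * Complex.normSq a * r :=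
      mul_lt_mul_of_pos_left htC hts
    have h8 : 0 < r * (t * Complex.normSq a) := mul_pos hr0 hts
    ring_nf at hq h7 h8
    linarith
  exact haz

end SigmaMinAux

/-- If σₙ(zIₙ − A) = dist(z, Λ(A)) for every z ∈ ℂ, then A is normal. -/
theorem normal_of_forall_singular_value_eq_dist
    {n : ℕ} (hn : 1 ≤ n) (A : Matrix (Fin n) (Fin n) ℂ)
    (h : ∀ z : ℂ, sigmaMin (z • (1 : Matrix (Fin n) (Fin n) ℂ) - A)
      = Metric.infDist z (spectrum ℂ A)) :
    Aᴴ * A = A * Aᴴ := by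
  have hn0 : 0 < n := hn
  set F : Module.End ℂ (EuclideanSpace ℂ (Fin n)) := Matrix.toEuclideanLin A with hF
  have hP : ∀ (μ : ℂ) (v w : EuclideanSpace ℂ (Fin n)), F v = μ • v →
      (inner ℂ v (F w - μ • w) : ℂ) = 0 := fun μ v w hv => SigmaMinAux.orth hn0 A h μ v w hv
  have happ : ∀ (μ : ℂ) (x : EuclideanSpace ℂ (Fin n)), (F - μ • 1) x = F x - μ • x := by
    intro μ x
    simp [LinearMap.sub_apply, LinearMap.smul_apply, Module.End.one_apply]
  have hg2 : ∀ (μ : ℂ) (x : EuclideanSpace ℂ (Fin n)),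
      (F - μ • 1) ((F - μ • 1) x) = 0 → (F - μ • 1) x = 0 := by
    intro μ x hx
    rw [happ, sub_eq_zero] at hx
    have h0 := hP μ ((F - μ • 1) x) x hx
    rw [happ] at h0
    exact inner_self_eq_zero.mp h0
  have hgenk : ∀ (μ : ℂ) (k : ℕ) (x : EuclideanSpace ℂ (Fin n)),
      ((F - μ • 1) ^ k) x = 0 → (F - μ • 1) x = 0 := by
    intro μ k
    induction k with
    | zero =>
      intro x hx
      simp only [pow_zero, Module.End.one_apply] at hx
      simp [hx]
    | succ k ih =>
      intro x hx
      rw [pow_succ] at hx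
      have hgx := ih ((F - μ • 1) x) (by simpa [Module.End.mul_apply] using hx)
      exact hg2 μ x hgx
  set Fs := LinearMap.adjoint F with hFs
  have hT : ∀ (μ : ℂ) (x : EuclideanSpace ℂ (Fin n)), F x = μ • x →
      (Fs * F) x = (F * Fs) x := by
    intro μ x hx
    have hadj : Fs x = (starRingEnd ℂ μ) • x := by
      apply ext_inner_right ℂ
      intro w
      rw [hFs, LinearMap.adjoint_inner_left]
      have h0 := hP μ x w hx
      rw [inner_sub_right, sub_eq_zero, inner_smul_right] at h0
      rw [inner_smul_left, h0]
      simp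
    rw [Module.End.mul_apply, Module.End.mul_apply, hx, hadj, _root_.map_smul, _root_.map_smul,
      hx, hadj, smul_smul, smul_smul, mul_comm]
  have hker : (⊤ : Submodule ℂ (EuclideanSpace ℂ (Fin n))) ≤ LinearMap.ker (Fs * F - F * Fs) := by
    rw [← Module.End.iSup_maxGenEigenspace_eq_top F]
    apply iSup_le
    intro μ x hx
    rw [Module.End.mem_maxGenEigenspace] at hx
    obtain ⟨k, hk⟩ := hx
    have hgx := hgenk μ k x hk
    rw [happ, sub_eq_zero] at hgx
    rw [LinearMap.mem_ker, LinearMap.sub_apply, hT μ x hgx, sub_self]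
  have hFsF : Fs * F = F * Fs := by
    have h0 : Fs * F - F * Fs = 0 := LinearMap.ker_eq_top.mp (top_le_iff.mp hker)
    exact sub_eq_zero.mp h0
  have hmul : ∀ P Q : Matrix (Fin n) (Fin n) ℂ,
      Matrix.toEuclideanLin (P * Q) = Matrix.toEuclideanLin P ∘ₗ Matrix.toEuclideanLin Q := by
    intro P Q
    rw [Matrix.toEuclideanLin_eq_toLin]
    exact Matrix.toLin_mul _ _ _ P Q
  apply Matrix.toEuclideanLin.injective
  rw [hmul, hmul, Matrix.toEuclideanLin_conjTranspose_eq_adjoint]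
  show Fs ∘ₗ F = F ∘ₗ Fs
  rw [← Module.End.mul_eq_comp, ← Module.End.mul_eq_comp, hFsF]
end
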